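/- (Consensus inequality.) Consider an algorithm of the form (alg) with a trajectory (x_i^k, y_i^k, z_i^k, u_i^k, v_i^k) where the Laplacians satisfy 1_nᵀ L^k = 0 for all k, and let (x*ᵢ, y*ᵢ, z*ᵢ, u*ᵢ, v*ᵢ) be a fixed point satisfying the fixed-point conditions (consensus, optimality, robustness). Let Ψ have columns forming a basis of the nullspace of [F_x F_u], let P ≻ 0 be symmetric, ρ ≥ 0, M₀ := [[−2mL, L+m],[L+m, −2]], and suppose Ψᵀ N₁ᵀ · blockdiag(P, −ρ²P, M₀) · N₁ Ψ ⪯ 0, where N₁ stacks the rows [A B_u], [I 0], [C_y D_{yu}], [0 1]. Then, with x̃^k ∈ ℝ^{nν}, ỹ^k, ũ^k ∈ ℝⁿ the stacked error vectors x̃ᵢ^k = x_i^k − x*ᵢ, ỹᵢ^k = y_i^k − y*ᵢ, ũᵢ^k = u_i^k − u*ᵢ, for every k: (x̃^{k+1})ᵀ (Π ⊗ P) x̃^{k+1} − ρ² (x̃^k)ᵀ (Π ⊗ P) x̃^k + [ỹ^k; ũ^k]ᵀ (M₀ ⊗ Π) [ỹ^k; ũ^k] ≤ 0, where Π := (1/n)·1_n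 1_nᵀ. -/

import Mathlib

open Matrix BigOperators Kronecker

/-- The projection matrix `Π = (1/n) 1ₙ 1ₙᵀ` onto the span of the all-ones vector. -/
noncomputable def projOnes (n : ℕ) : Matrix (Fin n) (Fin n) ℝ :=
  Matrix.of fun _ _ => (n : ℝ)⁻¹

/-- The matrix `M₀ = [[−2mL, L+m],[L+m, −2]]`. -/
noncomputable def M0 (m L : ℝ) : Matrix (Fin 2) (Fin 2) ℝ :=
  !![-(2*m*L), L+m; L+m, -2]

/-- The quadratic form `[y; u]ᵀ M₀ [y; u]`. -/
def quadM0 (m L y u : ℝ) : ℝ := -(2*m*L) * y^2 + 2*(L+m) * y * u - 2 * u^2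

lemma kronA {n ν : ℕ} (P : Matrix (Fin ν) (Fin ν) ℝ) (w : Fin n × Fin ν → ℝ) :
    w ⬝ᵥ (projOnes n ⊗ₖ P).mulVec w
      = (n:ℝ)⁻¹ * ((fun a => ∑ i, w (i, a)) ⬝ᵥ P.mulVec (fun a => ∑ i, w (i, a))) := by
  have hmv : ∀ p : Fin n × Fin ν, (projOnes n ⊗ₖ P).mulVec w p
      = (n:ℝ)⁻¹ * (P.mulVec (fun a => ∑ i, w (i, a))) p.2 := by
    intro p
    simp only [Matrix.mulVec, dotProduct, Matrix.kroneckerMap_apply, projOnes, Matrix.of_apply,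
      Fintype.sum_prod_type]
    rw [Finset.sum_comm, Finset.mul_sum]
    refine Finset.sum_congr rfl fun b _ => ?_
    rw [Finset.mul_sum, Finset.mul_sum]
    exact Finset.sum_congr rfl fun j _ => by ring
  simp only [dotProduct, hmv, Fintype.sum_prod_type]
  rw [Finset.sum_comm, Finset.mul_sum]
  refine Finset.sum_congr rfl fun a _ => ?_
  rw [← Finset.sum_mul]
  ring

lemma kronB {n s : ℕ} (M : Matrix (Fin s) (Fin s) ℝ) (q : Fin s × Fin n → ℝ) :
    q ⬝ᵥ (M ⊗ₖ projOnes n).mulVec q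
      = (n:ℝ)⁻¹ * ((fun α => ∑ j, q (α, j)) ⬝ᵥ M.mulVec (fun α => ∑ j, q (α, j))) := by
  have hmv : ∀ p : Fin s × Fin n, (M ⊗ₖ projOnes n).mulVec q p
      = (n:ℝ)⁻¹ * (M.mulVec (fun α => ∑ j, q (α, j))) p.1 := by
    intro p
    simp only [Matrix.mulVec, dotProduct, Matrix.kroneckerMap_apply, projOnes, Matrix.of_apply,
      Fintype.sum_prod_type]
    rw [Finset.mul_sum]
    refine Finset.sum_congr rfl fun b _ => ?_
    rw [Finset.mul_sum, Finset.mul_sum]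
    exact Finset.sum_congr rfl fun j _ => by ring
  simp only [dotProduct, hmv, Fintype.sum_prod_type]
  rw [Finset.mul_sum]
  refine Finset.sum_congr rfl fun a _ => ?_
  rw [← Finset.sum_mul]
  ring

lemma mulVec_sum' {n ν c : ℕ} (B : Matrix (Fin ν) (Fin c) ℝ) (f : Fin n → Fin c → ℝ) (a : Fin ν) :
    ∑ i, (B.mulVec (f i)) a = (B.mulVec (fun b => ∑ i, f i b)) a := by
  simp only [Matrix.mulVec, dotProduct, Finset.mul_sum]
  rw [Finset.sum_comm]

lemma mulVec_sub' {n' ν' : ℕ} (B : Matrix (Fin ν') (Fin n') ℝ) (f g : Fin n' → ℝ) (a : Fin ν') :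
    (B.mulVec f) a - (B.mulVec g) a = (B.mulVec (fun b => f b - g b)) a := by
  simp only [Matrix.mulVec, dotProduct, ← Finset.sum_sub_distrib]
  exact Finset.sum_congr rfl fun b _ => by ring

lemma dot_sum {n ν : ℕ} (Cy : Fin ν → ℝ) (f : Fin n → Fin ν → ℝ) :
    ∑ i, Cy ⬝ᵥ f i = Cy ⬝ᵥ (fun b => ∑ i, f i b) := by
  simp only [dotProduct, Finset.mul_sum]
  rw [Finset.sum_comm]

lemma quadM0_eval (m L : ℝ) (Q : Fin 2 → ℝ) :
    Q ⬝ᵥ (M0 m L).mulVec Q = quadM0 m L (Q 0) (Q 1) := by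
  simp [M0, quadM0, dotProduct, Matrix.mulVec, Fin.sum_univ_two]
  ring


/-- Consensus inequality: feasibility of (LMI-1) implies the per-step consensus
Lyapunov inequality along any trajectory. -/
theorem stmt_7
    (ν c r n sdim : ℕ) (m L ρ : ℝ)
    (hm : 0 < m) (hmL : m ≤ L) (hρ : 0 ≤ ρ)
    (A : Matrix (Fin ν) (Fin ν) ℝ) (Bu : Fin ν → ℝ) (Bv : Matrix (Fin ν) (Fin c) ℝ)
    (Cy : Fin ν → ℝ) (Dyu : ℝ) (Dyv : Fin c → ℝ)
    (Cz : Matrix (Fin c) (Fin ν) ℝ) (Dzu : Fin c → ℝ) (Dzv : Matrix (Fin c) (Fin c) ℝ)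
    (Fx : Matrix (Fin r) (Fin ν) ℝ) (Fu : Fin r → ℝ)
    -- Laplacians are balanced: 1ᵀ L^k = 0
    (Lap : ℕ → Matrix (Fin n) (Fin n) ℝ)
    (hL2 : ∀ k, Matrix.vecMul (fun _ => (1 : ℝ)) (Lap k) = 0)
    -- trajectory of the algorithm
    (x : ℕ → Fin n → Fin ν → ℝ) (y u : ℕ → Fin n → ℝ) (z v : ℕ → Fin n → Fin c → ℝ)
    (htraj1 : ∀ k i, x (k+1) i = A.mulVec (x k i) + u k i • Bu + Bv.mulVec (v k i))
    (htraj2 : ∀ k i, y k i = Cy ⬝ᵥ x k i + Dyu * u k i + Dyv ⬝ᵥ v k i)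
    (htraj3 : ∀ k i, z k i = Cz.mulVec (x k i) + u k i • Dzu + Dzv.mulVec (v k i))
    (htraj5 : ∀ k i, v k i = ∑ j, Lap k i j • z k j)
    (htraj6 : ∀ k, ∑ j, (Fx.mulVec (x k j) + u k j • Fu) = 0)
    -- fixed point satisfying the fixed-point conditions
    (xstar : Fin n → Fin ν → ℝ) (ystar ustar : Fin n → ℝ)
    (zstar vstar : Fin n → Fin c → ℝ)
    (hstar1 : ∀ i, xstar i = A.mulVec (xstar i) + ustar i • Bu + Bv.mulVec (vstar i))
    (hstar2 : ∀ i, ystar i = Cy ⬝ᵥ xstar i + Dyu * ustar i + Dyv ⬝ᵥ vstar i)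
    (hstar3 : ∀ i, zstar i = Cz.mulVec (xstar i) + ustar i • Dzu + Dzv.mulVec (vstar i))
    (hstar5 : ∀ k i, vstar i = ∑ j, Lap k i j • zstar j)
    (hstar6 : (∑ j, (Fx.mulVec (xstar j) + ustar j • Fu)) = 0)
    (hcons_y : ∀ i j, ystar i = ystar j) (hopt_u : ∑ i, ustar i = 0)
    (hcons_z : ∀ i j, zstar i = zstar j) (hrob_v : ∀ i, vstar i = 0)
    -- Ψ: columns form a basis of the nullspace of [Fx Fu]
    (Ψx : Matrix (Fin ν) (Fin sdim) ℝ) (Ψu : Fin sdim → ℝ)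
    (hΨ1 : ∀ s : Fin sdim → ℝ, Fx.mulVec (Ψx.mulVec s) + (Ψu ⬝ᵥ s) • Fu = 0)
    (hΨ2 : ∀ (xv : Fin ν → ℝ) (uv : ℝ), Fx.mulVec xv + uv • Fu = 0 →
      ∃ s : Fin sdim → ℝ, Ψx.mulVec s = xv ∧ Ψu ⬝ᵥ s = uv)
    (hΨ3 : ∀ s : Fin sdim → ℝ, Ψx.mulVec s = 0 → Ψu ⬝ᵥ s = 0 → s = 0)
    -- P ≻ 0 and (LMI-1) as a quadratic form
    (P : Matrix (Fin ν) (Fin ν) ℝ) (hP : P.PosDef)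
    (hLMI1 : ∀ s : Fin sdim → ℝ,
      (A.mulVec (Ψx.mulVec s) + (Ψu ⬝ᵥ s) • Bu) ⬝ᵥ
          P.mulVec (A.mulVec (Ψx.mulVec s) + (Ψu ⬝ᵥ s) • Bu)
        - ρ^2 * ((Ψx.mulVec s) ⬝ᵥ P.mulVec (Ψx.mulVec s))
        + quadM0 m L (Cy ⬝ᵥ (Ψx.mulVec s) + Dyu * (Ψu ⬝ᵥ s)) (Ψu ⬝ᵥ s) ≤ 0) :
    ∀ k : ℕ,
      (fun p : Fin n × Fin ν => x (k+1) p.1 p.2 - xstar p.1 p.2) ⬝ᵥ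
          (projOnes n ⊗ₖ P).mulVec
          (fun p : Fin n × Fin ν => x (k+1) p.1 p.2 - xstar p.1 p.2)
        - ρ^2 * ((fun p : Fin n × Fin ν => x k p.1 p.2 - xstar p.1 p.2) ⬝ᵥ
            (projOnes n ⊗ₖ P).mulVec
            (fun p : Fin n × Fin ν => x k p.1 p.2 - xstar p.1 p.2))
        + (fun p : Fin 2 × Fin n =>
              if p.1 = 0 then y k p.2 - ystar p.2 else u k p.2 - ustar p.2) ⬝ᵥ
            ((M0 m L) ⊗ₖ projOnes n).mulVec
            (fun p : Fin 2 × Fin n =>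
              if p.1 = 0 then y k p.2 - ystar p.2 else u k p.2 - ustar p.2) ≤ 0 := by
  intro k
  -- stacked errors
  set X1 : Fin ν → ℝ := fun a => ∑ i, (x (k+1) i a - xstar i a) with hX1def
  set X : Fin ν → ℝ := fun a => ∑ i, (x k i a - xstar i a) with hXdef
  set U : ℝ := ∑ i, (u k i - ustar i) with hUdef
  set Y : ℝ := ∑ i, (y k i - ystar i) with hYdef
  -- sum of v vanishes
  have hv : ∀ b, ∑ i, v k i b = 0 := by
    intro b
    have hcol : ∀ j, ∑ i, Lap k i j = 0 := by
      intro j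
      have := congrFun (hL2 k) j
      simpa [Matrix.vecMul, dotProduct] using this
    calc ∑ i, v k i b = ∑ i, ∑ j, Lap k i j * z k j b := by
          refine Finset.sum_congr rfl fun i _ => ?_
          rw [htraj5 k i]
          simp [Finset.sum_apply]
      _ = ∑ j, (∑ i, Lap k i j) * z k j b := by
          rw [Finset.sum_comm]
          exact Finset.sum_congr rfl fun j _ => by rw [Finset.sum_mul]
      _ = 0 := by simp [hcol]
  -- state recursion for the sums
  have hX1 : X1 = A.mulVec X + U • Bu := by
    funext a
    have hst : ∀ i, (A.mulVec (xstar i)) a + ustar i * Bu a = xstar i a := by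
      intro i
      conv_rhs => rw [hstar1 i]
      simp [hrob_v i]
    have hterm : ∀ i, x (k+1) i a - xstar i a
        = ((A.mulVec (x k i)) a - (A.mulVec (xstar i)) a)
          + (u k i - ustar i) * Bu a + (Bv.mulVec (v k i)) a := by
      intro i
      rw [htraj1 k i]
      have := hst i
      simp only [Pi.add_apply, Pi.smul_apply, smul_eq_mul]
      linarith
    have step1 : X1 a = ∑ i, (((A.mulVec (x k i)) a - (A.mulVec (xstar i)) a)
          + (u k i - ustar i) * Bu a + (Bv.mulVec (v k i)) a) :=
      Finset.sum_congr rfl fun i _ => hterm i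
    have e1 : ∑ i, (Bv.mulVec (v k i)) a = 0 := by
      rw [mulVec_sum']
      simp only [Matrix.mulVec, dotProduct]
      simp [hv]
    have e2 : (∑ i, (A.mulVec (x k i)) a) - (∑ i, (A.mulVec (xstar i)) a) = (A.mulVec X) a := by
      rw [mulVec_sum', mulVec_sum', mulVec_sub']
      congr 1
      funext b
      rw [hXdef]
      exact (Finset.sum_sub_distrib _ _).symm
    rw [step1, Finset.sum_add_distrib, Finset.sum_add_distrib, Finset.sum_sub_distrib, e1,
      add_zero, ← Finset.sum_mul, e2, ← hUdef]
    simp [Pi.add_apply]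
  -- output equation for the sums
  have hY : Y = Cy ⬝ᵥ X + Dyu * U := by
    have hst : ∀ i, Cy ⬝ᵥ xstar i + Dyu * ustar i = ystar i := by
      intro i
      rw [hstar2 i]
      simp [hrob_v i]
    have hterm : ∀ i, y k i - ystar i
        = (Cy ⬝ᵥ x k i - Cy ⬝ᵥ xstar i) + Dyu * (u k i - ustar i) + Dyv ⬝ᵥ v k i := by
      intro i
      rw [htraj2 k i]
      have := hst i
      linarith
    have step1 : Y = ∑ i, ((Cy ⬝ᵥ x k i - Cy ⬝ᵥ xstar i) + Dyu * (u k i - ustar i)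
          + Dyv ⬝ᵥ v k i) := Finset.sum_congr rfl fun i _ => hterm i
    have e1 : ∑ i, Dyv ⬝ᵥ v k i = 0 := by
      rw [dot_sum]
      simp [dotProduct, hv]
    have e2 : (∑ i, Cy ⬝ᵥ x k i) - (∑ i, Cy ⬝ᵥ xstar i) = Cy ⬝ᵥ X := by
      rw [dot_sum, dot_sum]
      simp only [dotProduct, ← Finset.sum_sub_distrib]
      refine Finset.sum_congr rfl fun b _ => ?_
      simp only [hXdef, Finset.sum_sub_distrib]
      ring
    rw [step1, Finset.sum_add_distrib, Finset.sum_add_distrib, Finset.sum_sub_distrib, e1,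
      add_zero, ← Finset.mul_sum, e2, ← hUdef]
  -- constraint
  -- constraint
  have hFeas : Fx.mulVec X + U • Fu = 0 := by
    funext a
    have h6 := congrFun (htraj6 k) a
    have h6s := congrFun hstar6 a
    simp only [Finset.sum_apply, Pi.add_apply, Pi.smul_apply, smul_eq_mul, Pi.zero_apply] at h6 h6s
    have e2 : (Fx.mulVec X) a = (∑ j, (Fx.mulVec (x k j)) a) - ∑ j, (Fx.mulVec (xstar j)) a := by
      rw [mulVec_sum', mulVec_sum']
      simp only [Matrix.mulVec, dotProduct, hXdef, Finset.mul_sum, ← Finset.sum_sub_distrib]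
      exact Finset.sum_congr rfl fun b _ => by ring
    have e3 : U * Fu a = (∑ j, u k j * Fu a) - ∑ j, ustar j * Fu a := by
      rw [hUdef, Finset.sum_mul, ← Finset.sum_sub_distrib]
      exact Finset.sum_congr rfl fun j _ => by ring
    simp only [Pi.add_apply, Pi.smul_apply, smul_eq_mul, Pi.zero_apply, e2, e3]
    rw [Finset.sum_add_distrib] at h6 h6s
    linarith
  obtain ⟨s, hs1, hs2⟩ := hΨ2 X U hFeas
  have hLMI := hLMI1 s
  rw [hs1, hs2] at hLMI
  have hn : (0:ℝ) ≤ (n:ℝ)⁻¹ := by positivity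
  rw [kronA, kronA, kronB]
  have hq0 : (fun α => ∑ j, (fun p : Fin 2 × Fin n =>
      if p.1 = 0 then y k p.2 - ystar p.2 else u k p.2 - ustar p.2) (α, j)) ⬝ᵥ
      (M0 m L).mulVec (fun α => ∑ j, (fun p : Fin 2 × Fin n =>
      if p.1 = 0 then y k p.2 - ystar p.2 else u k p.2 - ustar p.2) (α, j))
      = quadM0 m L Y U := by
    rw [quadM0_eval]
    norm_num [hYdef, hUdef]
  rw [hq0]
  have hx1 : (fun a => ∑ i, (fun p : Fin n × Fin ν => x (k+1) p.1 p.2 - xstar p.1 p.2) (i, a)) = X1 := rfl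
  have hx : (fun a => ∑ i, (fun p : Fin n × Fin ν => x k p.1 p.2 - xstar p.1 p.2) (i, a)) = X := rfl
  rw [hx1, hx, hX1, hY]
  calc (n:ℝ)⁻¹ * ((A.mulVec X + U • Bu) ⬝ᵥ P.mulVec (A.mulVec X + U • Bu))
        - ρ^2 * ((n:ℝ)⁻¹ * (X ⬝ᵥ P.mulVec X))
        + (n:ℝ)⁻¹ * quadM0 m L (Cy ⬝ᵥ X + Dyu * U) U
      = (n:ℝ)⁻¹ * ((A.mulVec X + U • Bu) ⬝ᵥ P.mulVec (A.mulVec X + U • Bu)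
          - ρ^2 * (X ⬝ᵥ P.mulVec X)
          + quadM0 m L (Cy ⬝ᵥ X + Dyu * U) U) := by ring
    _ ≤ 0 := mul_nonpos_of_nonneg_of_nonpos hn hLMI
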